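/- Fix the order E < N < D. Define φ on bad Delannoy paths W in Del(n,n,l): let w_k be the first deepest step and W_1 = w_{k-r}...w_{k+s} the maximal window with w_{k-i}=D for 1≤i≤r, w_{k+j}=D for 1≤j≤s, w_{k-r-1}≠D, w_{k+s+1}≠D. If r ≥ 1, replace W_1 by D^{r-1} E D^{s+1}; if r = 0, replace W_1 by D^s E. Then φ(W) ∈ Del(n+1,n-1,l) and maj(W) = maj(φ(W)) + 1. -/

import Mathlib

inductive Step : Type
  | E | D | N
deriving DecidableEq

instance : Fintype Step :=
  ⟨{Step.E, Step.D, Step.N}, fun x => by cases x <;> simp⟩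

open Step Polynomial

/-- All words of length `l` over the step alphabet. -/
def Words (l : ℕ) : Finset (List Step) :=
  (Finset.univ : Finset (Fin l → Step)).image List.ofFn

/-- Delannoy paths from (0,0) to (m,n) with `l` steps, encoded as words:
`#E + #D = m`, `#N + #D = n`, length `l`. -/
def DelSet (m n l : ℕ) : Finset (List Step) :=
  (Words l).filter fun w => w.count E + w.count D = m ∧ w.count N + w.count D = n

/-- A word is bad if some prefix contains more N's than E's. -/
def bad (w : List Step) : Bool :=
  (List.range (w.length + 1)).any fun k => (w.take k).count E < (w.take k).count N

/-- Bad Delannoy paths from (0,0) to (n,n) with `l` steps. -/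
def BDelSet (n l : ℕ) : Finset (List Step) :=
  (DelSet n n l).filter fun w => bad w

/-- Schröder paths: Delannoy paths to (n,n) never going above the diagonal. -/
def SchSet (n l : ℕ) : Finset (List Step) :=
  (DelSet n n l).filter fun w => ¬ bad w

/-- Major index of a word w_1 ⋯ w_l with respect to a ranking of the letters:
the sum of all positions i (1 ≤ i ≤ l-1) with w_i > w_{i+1}. -/
def maj (rank : Step → ℕ) (w : List Step) : ℕ :=
  ∑ i ∈ Finset.range (w.length - 1),
    if rank (w.getD (i + 1) E) < rank (w.getD i E) then i + 1 else 0

/-- q-integer [m] = 1 + q + ⋯ + q^{m-1}. -/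
noncomputable def qint (m : ℕ) : Polynomial ℚ :=
  ∑ i ∈ Finset.range m, X ^ i

/-- q-factorial. -/
noncomputable def qfact : ℕ → Polynomial ℚ
  | 0 => 1
  | m + 1 => qfact m * qint (m + 1)

/-- Gaussian binomial coefficient, via the q-Pascal recurrence. -/
noncomputable def qbinom : ℕ → ℕ → Polynomial ℚ
  | _, 0 => 1
  | 0, _ + 1 => 0
  | m + 1, k + 1 => qbinom m k + X ^ (k + 1) * qbinom m (k + 1)

/-- q-trinomial coefficient [l]!/([a]![b]![c]!), defined when a+b+c = l. -/
noncomputable def qbinom3 (l a b c : ℕ) : Polynomial ℚ :=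
  if a + b + c = l then qbinom l a * qbinom (l - a) b else 0

/-- Depth after the first `i` steps: #N − #E. -/
def depth (w : List Step) (i : ℕ) : ℤ :=
  ((w.take i).count N : ℤ) - (w.take i).count E

/-- `k` (0 ≤ k ≤ l) achieves the maximal running depth. -/
def isMaxDepth (w : List Step) (k : ℕ) : Bool :=
  (List.range (w.length + 1)).all fun i => decide (depth w i ≤ depth w k)

/-- The first index (number of steps) at which the running depth is maximal. -/
def firstDeep (w : List Step) : ℕ :=
  (List.range (w.length + 1)).findIdx (isMaxDepth w)

/-- The last index at which the running depth is maximal. -/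
def lastDeep (w : List Step) : ℕ :=
  w.length - (List.range (w.length + 1)).reverse.findIdx (isMaxDepth w)

/-- Replace the first deepest step (the step w_k, k = firstDeep) with E. -/
def phi (w : List Step) : List Step := w.set (firstDeep w - 1) E

/-- Replace the step following the last deepest point with N. -/
def phiInv (w : List Step) : List Step := w.set (lastDeep w) N

/-- Number of consecutive D's immediately after the first deepest step. -/
def runS (w : List Step) : ℕ := ((w.drop (firstDeep w)).takeWhile (· == D)).length

/-- Number of consecutive D's immediately before the first deepest step. -/
def runR (w : List Step) : ℕ :=
  ((w.take (firstDeep w - 1)).reverse.takeWhile (· == D)).length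

/-- The window map: replace W₁ = D^r w_k D^s by D^{r-1} E D^{s+1} if r ≥ 1,
and by D^s E if r = 0. -/
def phiWin (w : List Step) : List Step :=
  let k := firstDeep w - 1
  let r := runR w
  let s := runS w
  let seg : List Step :=
    if 1 ≤ r then List.replicate (r - 1) D ++ [E] ++ List.replicate (s + 1) D
    else List.replicate s D ++ [E]
  w.take (k - r) ++ seg ++ w.drop (k + s + 1)

/-- 0-based index of the first step after which the path is above the diagonal. -/
def firstAbove (w : List Step) : ℕ :=
  (List.range w.length).findIdx fun i =>
    decide ((w.take (i + 1)).count E < (w.take (i + 1)).count N)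

/-- The map ψ of Bonin–Shapiro–Simion: replace with E the last N of the maximal
run of consecutive N's beginning at the first step going above the diagonal. -/
def psi (w : List Step) : List Step :=
  let i := firstAbove w
  let j := i + ((w.drop i).takeWhile (· == N)).length - 1
  w.set j E

namespace PW

variable (rank : Step → ℕ)

def junc (t : ℕ) : Option Step → Option Step → ℕ
  | some a, some b => if rank b < rank a then t else 0
  | _, _ => 0

def majA : ℕ → List Step → ℕ
  | _, [] => 0
  | t, a :: x => junc rank (t + 1) (some a) x.head? + majA (t + 1) x

lemma majA_eq (w : List Step) : ∀ t, majA rank t w =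
    ∑ i ∈ Finset.range (w.length - 1),
      if rank (w.getD (i + 1) E) < rank (w.getD i E) then t + i + 1 else 0 := by
  induction w with
  | nil => simp [majA]
  | cons a x ih =>
    intro t
    cases x with
    | nil => simp [majA, junc]
    | cons b y =>
      rw [majA, ih (t + 1)]
      have : (a :: b :: y : List Step).length - 1 = ((b :: y : List Step).length - 1) + 1 := by
        simp
      rw [this, Finset.sum_range_succ', add_comm]
      congr 1
      apply Finset.sum_congr rfl
      intro i _
      simp only [List.getD_cons_succ]
      rw [show t + 1 + i + 1 = t + (i + 1) + 1 by omega]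

lemma maj_eq_majA (w : List Step) : maj rank w = majA rank 0 w := by
  rw [majA_eq, maj]
  apply Finset.sum_congr rfl
  intro i _
  simp

lemma majA_cons (t : ℕ) (a : Step) (x : List Step) :
    majA rank t (a :: x) = junc rank (t + 1) (some a) x.head? + majA rank (t + 1) x := rfl

lemma majA_repl (m : ℕ) (z : List Step) : ∀ t, majA rank t (List.replicate m D ++ z) =
    (if m = 0 then 0 else junc rank (t + m) (some D) z.head?) + majA rank (t + m) z := by
  induction m with
  | zero => simp
  | succ m ih =>
    intro t
    rw [List.replicate_succ, List.cons_append, majA_cons, ih (t + 1)]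
    cases m with
    | zero => simp
    | succ m' =>
      have h1 : (List.replicate (m' + 1) D ++ z).head? = some D := by
        simp [List.replicate_succ]
      rw [h1]
      have h2 : junc rank (t + 1) (some D) (some D) = 0 := by simp [junc]
      rw [h2, show t + 1 + (m' + 1) = t + (m' + 1 + 1) by omega]
      simp

lemma junc_E (t : ℕ) (hEN : rank E < rank N) (hND : rank N < rank D) (o : Option Step) :
    junc rank t (some E) o = 0 := by
  rcases o with _ | b
  · rfl
  · cases b <;> simp [junc] <;> omega

/-- maj of the old window-tail: D^r N D^s E B. -/
lemma majA_X (hEN : rank E < rank N) (hND : rank N < rank D)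
    (r s : ℕ) (B : List Step) (t : ℕ) :
    majA rank t (List.replicate r D ++ (N :: (List.replicate s D ++ (E :: B)))) =
      (if r = 0 then 0 else t + r) + (t + r + s + 1) + majA rank (t + r + s + 2) B := by
  rw [majA_repl, majA_cons]
  have hZ : majA rank (t + r + 1) (List.replicate s D ++ (E :: B)) =
      (if s = 0 then 0 else t + r + 1 + s) + majA rank (t + r + s + 2) B := by
    rw [majA_repl rank s (E :: B) (t + r + 1), majA_cons,
      junc_E rank _ hEN hND, show t + r + 1 + s + 1 = t + r + s + 2 by omega]
    cases s with
    | zero => simp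
    | succ s' => simp [junc, hND.trans' hEN, hEN.trans hND]
  rw [hZ]
  have hED : rank E < rank D := hEN.trans hND
  cases s <;> cases r <;>
    simp [junc, List.replicate_succ, hEN, hND, hED, not_lt_of_gt hEN, not_lt_of_gt hND,
      not_lt_of_gt hED] <;> omega

/-- maj of the new window-tail, case r = r'+1 ≥ 1: D^{r-1} E D^{s+1} E B. -/
lemma majA_Y1 (hEN : rank E < rank N) (hND : rank N < rank D)
    (r' s : ℕ) (B : List Step) (t : ℕ) :
    majA rank t (List.replicate r' D ++ (E :: (List.replicate (s + 1) D ++ (E :: B)))) =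
      (if r' = 0 then 0 else t + r') + (t + r' + s + 2) + majA rank (t + r' + s + 3) B := by
  have hED : rank E < rank D := hEN.trans hND
  rw [majA_repl, majA_cons, majA_repl, majA_cons]
  simp only [junc_E rank _ hEN hND]
  have h1 : junc rank (t + r' + 1 + (s + 1)) (some D) ((E :: B).head?) = t + r' + s + 2 := by
    simp [junc, hED]; omega
  rw [h1, show t + r' + 1 + (s + 1) + 1 = t + r' + s + 3 by omega]
  cases r' <;> simp [junc, hED, List.replicate_succ] <;> omega

/-- maj of the new window-tail, case r = 0: D^s E E B. -/
lemma majA_Y0 (hEN : rank E < rank N) (hND : rank N < rank D)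
    (s : ℕ) (B : List Step) (t : ℕ) :
    majA rank t (List.replicate s D ++ (E :: (E :: B))) =
      (if s = 0 then 0 else t + s) + majA rank (t + s + 2) B := by
  have hED : rank E < rank D := hEN.trans hND
  rw [majA_repl, majA_cons, majA_cons]
  simp only [junc_E rank _ hEN hND]
  rw [show t + s + 1 + 1 = t + s + 2 by omega]
  cases s <;> simp [junc, hED, List.replicate_succ] <;> omega

lemma majA_append (x : List Step) : ∀ (A : List Step) (t : ℕ),
    majA rank t (A ++ x) =
      majA rank t A + junc rank (t + A.length) A.getLast? x.head? + majA rank (t + A.length) x := by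
  intro A
  induction A with
  | nil => simp [majA, junc]
  | cons a A ih =>
    intro t
    rw [List.cons_append, majA_cons, ih (t + 1), majA_cons]
    cases A with
    | nil => simp [majA, junc]
    | cons c A' =>
      simp only [List.cons_append, List.head?_cons, List.getLast?_cons_cons, List.length_cons]
      rw [show t + 1 + (A'.length + 1) = t + (A'.length + 1 + 1) by omega]
      ring

lemma junc_toD (hEN : rank E < rank N) (hND : rank N < rank D) (t : ℕ) (o : Option Step) :
    junc rank t o (some D) = 0 := by
  rcases o with _ | a
  · rfl
  · cases a <;> simp [junc] <;> omega

lemma key1 (hEN : rank E < rank N) (hND : rank N < rank D) (r' s : ℕ) (A B : List Step)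
    (hA : A = [] ∨ A.getLast? = some N) :
    majA rank 0 (A ++ (List.replicate (r' + 1) D ++ (N :: (List.replicate s D ++ (E :: B))))) =
      majA rank 0 (A ++ (List.replicate r' D ++ (E :: (List.replicate (s + 1) D ++ (E :: B))))) + 1 := by
  rw [majA_append rank _ A, majA_append rank _ A, majA_X rank hEN hND (r' + 1) s B,
    majA_Y1 rank hEN hND r' s B]
  have hXh : (List.replicate (r' + 1) D ++ (N :: (List.replicate s D ++ (E :: B)))).head? = some D := by
    simp [List.replicate_succ]
  rw [hXh, junc_toD rank hEN hND]
  rcases r' with _ | r''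
  · -- r = 1 : new head is E
    have hYh : (List.replicate 0 D ++ (E :: (List.replicate (s + 1) D ++ (E :: B)))).head? = some E := by
      simp
    rw [hYh]
    rcases hA with hA | hA
    · subst hA
      simp [junc, Nat.add_comm, Nat.add_left_comm, Nat.add_assoc]
      try omega
    · rw [hA]
      simp [junc, hEN, hND, not_lt_of_gt hEN, not_lt_of_gt hND, not_lt_of_gt (hEN.trans hND),
        Nat.add_comm, Nat.add_left_comm, Nat.add_assoc]
      try omega
  · have hYh : (List.replicate (r'' + 1) D ++ (E :: (List.replicate (s + 1) D ++ (E :: B)))).head? = some D := by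
      simp [List.replicate_succ]
    rw [hYh, junc_toD rank hEN hND]
    simp [junc, hEN, hND, not_lt_of_gt hEN, not_lt_of_gt hND, not_lt_of_gt (hEN.trans hND),
      Nat.add_comm, Nat.add_left_comm, Nat.add_assoc]
    try omega

lemma key0 (hEN : rank E < rank N) (hND : rank N < rank D) (s : ℕ) (A B : List Step)
    (hA : A = [] ∨ A.getLast? = some N) (hAD : A.getLast? ≠ some D) :
    majA rank 0 (A ++ (N :: (List.replicate s D ++ (E :: B)))) =
      majA rank 0 (A ++ (List.replicate s D ++ (E :: (E :: B)))) + 1 := by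
  have hX : majA rank (0 + A.length) (N :: (List.replicate s D ++ (E :: B))) =
      (0 + A.length + 0 + s + 1) + majA rank (0 + A.length + 0 + s + 2) B := by
    have := majA_X rank hEN hND 0 s B (0 + A.length)
    simpa using this
  rw [majA_append, majA_append, hX, majA_Y0 rank hEN hND s B]
  have hXh : junc rank (0 + A.length) A.getLast? ((N :: (List.replicate s D ++ (E :: B))).head?) = 0 := by
    rcases hA with hA | hA
    · subst hA; simp [junc]
    · rw [hA]; simp [junc, not_lt_of_gt hND]
  rw [hXh]
  rcases s with _ | s'
  · have hYh : (List.replicate 0 D ++ (E :: (E :: B))).head? = some E := by simp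
    rw [hYh]
    rcases hA with hA | hA
    · subst hA
      simp [junc, Nat.add_comm, Nat.add_left_comm, Nat.add_assoc]
      try omega
    · rw [hA]
      simp [junc, hEN, hND, not_lt_of_gt hEN, not_lt_of_gt hND, not_lt_of_gt (hEN.trans hND),
        Nat.add_comm, Nat.add_left_comm, Nat.add_assoc]
      try omega
  · have hYh : (List.replicate (s' + 1) D ++ (E :: (E :: B))).head? = some D := by
      simp [List.replicate_succ]
    rw [hYh, junc_toD rank hEN hND]
    simp [junc, hEN, hND, not_lt_of_gt hEN, not_lt_of_gt hND, not_lt_of_gt (hEN.trans hND),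
      Nat.add_comm, Nat.add_left_comm, Nat.add_assoc]
    try omega

end PW

namespace PW2
open PW

def dval : Step → ℤ | E => -1 | D => 0 | N => 1

lemma tw_getD {p : Step → Bool} {l : List Step} {i : ℕ}
    (h : i < (l.takeWhile p).length) : p (l.getD i E) = true := by
  have hpre : l.takeWhile p <+: l := List.takeWhile_prefix p
  have h1 : i < l.length := lt_of_lt_of_le h hpre.length_le
  have heq : l.takeWhile p = l.take (l.takeWhile p).length := List.prefix_iff_eq_take.mp hpre
  have h2 : (l.takeWhile p)[i] ∈ l.takeWhile p := List.getElem_mem _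
  have h3 := List.mem_takeWhile_imp h2
  have h4 : (l.takeWhile p)[i] = l[i] := by
    rw [List.getElem_of_eq heq h]
    exact List.getElem_take
  rw [List.getD_eq_getElem l E h1, ← h4]
  exact h3

lemma tw_stop {p : Step → Bool} : ∀ {l : List Step},
    (l.takeWhile p).length < l.length → p (l.getD (l.takeWhile p).length E) = false := by
  intro l
  induction l with
  | nil => simp
  | cons a t ih =>
    intro h
    by_cases hpa : p a = true
    · rw [List.takeWhile_cons_of_pos hpa] at h ⊢
      simp only [List.length_cons, List.getD_cons_succ]
      exact ih (by simpa using h)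
    · rw [List.takeWhile_cons_of_neg hpa]
      simpa using hpa

lemma depth_zero (w : List Step) : depth w 0 = 0 := by simp [depth]

lemma depth_succ (w : List Step) (i : ℕ) (h : i < w.length) :
    depth w (i + 1) = depth w i + dval (w.getD i E) := by
  have h1 : w[i]? = some w[i] := List.getElem?_eq_getElem h
  rw [List.getD_eq_getElem w E h]
  unfold depth
  rw [List.take_succ, h1]
  rcases hc : w[i] with _ | _ | _ <;>
    simp [hc, List.count_append, dval] <;> push_cast <;> ring

lemma depth_const (w : List Step) (a : ℕ) : ∀ m : ℕ,
    (∀ i < m, w.getD (a + i) E = D) → a + m ≤ w.length → depth w (a + m) = depth w a := by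
  intro m
  induction m with
  | zero => simp
  | succ m ih =>
    intro hD hlen
    rw [show a + (m + 1) = (a + m) + 1 by omega,
      depth_succ w (a + m) (by omega), hD m (by omega), ih (fun i hi => hD i (by omega)) (by omega)]
    simp [dval]

lemma drop_cons (w : List Step) (a : ℕ) (h : a < w.length) :
    w.drop a = w.getD a E :: w.drop (a + 1) := by
  rw [List.drop_eq_getElem_cons h, List.getD_eq_getElem w E h]

lemma drop_repl (w : List Step) : ∀ (m a : ℕ),
    (∀ i < m, w.getD (a + i) E = D) → a + m ≤ w.length →
    w.drop a = List.replicate m D ++ w.drop (a + m) := by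
  intro m
  induction m with
  | zero => simp
  | succ m ih =>
    intro a hD hlen
    have h0 : w.getD a E = D := by
      have := hD 0 (by omega)
      rwa [Nat.add_zero] at this
    rw [List.replicate_succ, drop_cons w a (by omega), h0]
    simp only [List.cons_append, List.cons.injEq, Nat.add_zero]
    refine ⟨trivial, ?_⟩
    rw [ih (a + 1) (fun i hi => by
        rw [show a + 1 + i = a + (i + 1) by omega]; exact hD (i + 1) (by omega)) (by omega),
      show a + 1 + m = a + (m + 1) by omega]

lemma getD_take {w : List Step} {m i : ℕ} (h : i < m) :
    (w.take m).getD i E = w.getD i E := by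
  rcases Nat.lt_or_ge i w.length with h1 | h1
  · have h2 : i < (w.take m).length := by rw [List.length_take]; omega
    rw [List.getD_eq_getElem _ E h2, List.getElem_take, List.getD_eq_getElem w E h1]
  · have h2 : (w.take m).length ≤ i := by rw [List.length_take]; omega
    rw [List.getD_eq_default _ E h2, List.getD_eq_default _ E h1]

lemma mem_Words {l : ℕ} {x : List Step} : x ∈ Words l ↔ x.length = l := by
  constructor
  · intro hx
    simp only [Words, Finset.mem_image] at hx
    obtain ⟨f, -, rfl⟩ := hx
    simp
  · intro h
    subst h
    simp only [Words, Finset.mem_image]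
    exact ⟨x.get, Finset.mem_univ _, List.ofFn_get x⟩


theorem decomp (w : List Step) (hbad : bad w = true) (hbal : w.count N = w.count E) :
    ∃ (r s : ℕ) (A B : List Step),
      A.length = firstDeep w - 1 - runR w ∧ runR w = r ∧ runS w = s ∧
      w = A ++ (List.replicate r D ++ (N :: (List.replicate s D ++ (E :: B)))) ∧
      (A = [] ∨ A.getLast? = some N) ∧
      phiWin w = A ++ ((if 1 ≤ r then List.replicate (r - 1) D ++ [E] ++ List.replicate (s + 1) D
        else List.replicate s D ++ [E]) ++ (E :: B)) := by
  set L := w.length with hL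
  -- a maximizer of depth exists
  obtain ⟨k₀, hk₀m, hk₀⟩ := Finset.exists_max_image (Finset.range (L + 1)) (depth w)
    ⟨0, Finset.mem_range.mpr (by omega)⟩
  have hmax0 : isMaxDepth w k₀ = true := by
    unfold isMaxDepth
    rw [List.all_eq_true]
    intro i hi
    rw [List.mem_range] at hi
    exact decide_eq_true (hk₀ i (Finset.mem_range.mpr hi))
  have hex : ∃ x ∈ List.range (L + 1), isMaxDepth w x = true :=
    ⟨k₀, List.mem_range.mpr (Finset.mem_range.mp hk₀m), hmax0⟩
  set k := firstDeep w with hkdef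
  have hklt : k < L + 1 := by
    have h := List.findIdx_lt_length_of_exists hex
    rw [List.length_range] at h
    exact h
  have hkm : isMaxDepth w k = true := by
    have h := @List.findIdx_getElem _ (isMaxDepth w) (List.range (L + 1))
      (by simpa [← hL] using List.findIdx_lt_length_of_exists hex)
    simp only [List.getElem_range] at h
    exact h
  have hmax : ∀ i, i ≤ L → depth w i ≤ depth w k := by
    intro i hi
    unfold isMaxDepth at hkm
    rw [List.all_eq_true] at hkm
    have := hkm i (List.mem_range.mpr (by omega))
    exact of_decide_eq_true this
  have hfirst : ∀ i, i < k → depth w i < depth w k := by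
    intro i hi
    have hfalse : isMaxDepth w i = false := by
      have h := @List.not_of_lt_findIdx _ (isMaxDepth w) (List.range (L + 1)) i
        (by exact hi)
      simpa [List.getElem_range] using h
    unfold isMaxDepth at hfalse
    rw [← Bool.not_eq_true, List.all_eq_true] at hfalse
    push_neg at hfalse
    obtain ⟨j, hj, hj2⟩ := hfalse
    rw [List.mem_range] at hj
    have h1 : depth w i < depth w j := by simpa using hj2
    have h2 := hmax j (by omega)
    omega
  have hbad' : ∃ m, m ≤ L ∧ 0 < depth w m := by
    unfold bad at hbad
    rw [List.any_eq_true] at hbad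
    obtain ⟨m, hm, hm2⟩ := hbad
    rw [List.mem_range] at hm
    refine ⟨m, by omega, ?_⟩
    have := of_decide_eq_true hm2
    unfold depth
    omega
  obtain ⟨m₀, hm₀, hm₀2⟩ := hbad'
  have hdkpos : 0 < depth w k := lt_of_lt_of_le hm₀2 (hmax m₀ hm₀)
  have hdL : depth w L = 0 := by
    unfold depth
    rw [hL, List.take_length]
    omega
  have hk1 : 1 ≤ k := by
    rcases Nat.eq_zero_or_pos k with h | h
    · rw [h, depth_zero] at hdkpos; omega
    · exact h
  have hkL : k < L := by
    rcases Nat.lt_or_ge k L with h | h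
    · exact h
    · exfalso
      have : k = L := by omega
      rw [this, hdL] at hdkpos
      omega
  -- the first deepest step is an N
  have hstep : depth w k = depth w (k - 1) + dval (w.getD (k - 1) E) := by
    have h := depth_succ w (k - 1) (by omega)
    rwa [show k - 1 + 1 = k by omega] at h
  have hNk : w.getD (k - 1) E = N := by
    have h2 := hfirst (k - 1) (by omega)
    rcases hgd : w.getD (k - 1) E with _ | _ | _ <;> rw [hgd] at hstep <;>
      simp [dval] at hstep <;> omega
  -- the run of D's after the deepest step
  set s := runS w with hsdef
  have hsdef' : s = ((w.drop k).takeWhile (· == D)).length := rfl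
  have hsD : ∀ i < s, w.getD (k + i) E = D := by
    intro i hi
    have h := tw_getD (p := (· == D)) (l := w.drop k) (i := i) (by omega)
    have hdg : (w.drop k).getD i E = w.getD (k + i) E := by
      have hiL : i < (w.drop k).length := lt_of_lt_of_le hi
        (by rw [hsdef']; exact (List.takeWhile_prefix _).length_le)
      have hiw : k + i < w.length := by rw [List.length_drop] at hiL; omega
      rw [List.getD_eq_getElem _ E hiL, List.getElem_drop, List.getD_eq_getElem w E hiw]
    rw [hdg] at h
    simpa using h
  have hsle : s ≤ L - k := by
    rw [hsdef']
    have := (List.takeWhile_prefix (l := w.drop k) (· == D)).length_le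
    simpa [List.length_drop, ← hL] using this
  have hsL : k + s < L := by
    by_contra hcon
    have hseq : s = L - k := by omega
    have hall : ∀ i < L - k, w.getD (k + i) E = D := by
      intro i hi; exact hsD i (by omega)
    have := depth_const w k (L - k) hall (by omega)
    rw [show k + (L - k) = L by omega, hdL] at this
    omega
  have hsE : w.getD (k + s) E = E := by
    have hnotD : w.getD (k + s) E ≠ D := by
      have h := tw_stop (p := (· == D)) (l := w.drop k)
        (by rw [← hsdef', List.length_drop, ← hL]; omega)
      rw [← hsdef'] at h
      have hdg : (w.drop k).getD s E = w.getD (k + s) E := by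
        have h1 : s < (w.drop k).length := by rw [List.length_drop, ← hL]; omega
        have h2 : k + s < w.length := by rw [← hL]; omega
        rw [List.getD_eq_getElem _ E h1, List.getElem_drop, List.getD_eq_getElem w E h2]
      rw [hdg] at h
      simpa using h
    have hdconst : depth w (k + s) = depth w k := depth_const w k s hsD (by omega)
    have hnotN : w.getD (k + s) E ≠ N := by
      intro hcon
      have h := depth_succ w (k + s) (by omega)
      rw [hcon, hdconst] at h
      have := hmax (k + s + 1) (by omega)
      simp [dval] at h
      omega
    rcases hx : w.getD (k + s) E with _ | _ | _
    · rfl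
    · exact absurd hx hnotD
    · exact absurd hx hnotN
  -- the run of D's before the deepest step
  set r := runR w with hrdef
  have hrdef' : r = ((w.take (k - 1)).reverse.takeWhile (· == D)).length := rfl
  have hRLlen : (w.take (k - 1)).reverse.length = k - 1 := by
    rw [List.length_reverse, List.length_take]
    omega
  have hrle : r ≤ k - 1 := by
    rw [hrdef']
    have := (List.takeWhile_prefix (l := (w.take (k - 1)).reverse) (· == D)).length_le
    omega
  have htklen : (w.take (k - 1)).length = k - 1 := by
    rw [List.length_take]; omega
  have hRLgetD : ∀ j, j < k - 1 → (w.take (k - 1)).reverse.getD j E = w.getD (k - 2 - j) E := by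
    intro j hj
    have hj1 : j < (w.take (k - 1)).reverse.length := by rw [hRLlen]; omega
    have hj2 : (w.take (k - 1)).length - 1 - j < (w.take (k - 1)).length := by
      rw [htklen]; omega
    rw [List.getD_eq_getElem _ E hj1, List.getElem_reverse,
      ← List.getD_eq_getElem (w.take (k - 1)) E hj2, htklen,
      show k - 1 - 1 - j = k - 2 - j by omega, getD_take (show k - 2 - j < k - 1 by omega)]
  have hrD : ∀ i < r, w.getD (k - 1 - r + i) E = D := by
    intro i hi
    have hij : r - 1 - i < k - 1 := by omega
    have h := tw_getD (p := (· == D)) (l := (w.take (k - 1)).reverse) (i := r - 1 - i)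
      (by omega)
    rw [hRLgetD (r - 1 - i) hij] at h
    rw [show k - 1 - r + i = k - 2 - (r - 1 - i) by omega]
    simpa using h
  set p := k - 1 - r with hpdef
  have hAN : 1 ≤ p → w.getD (p - 1) E = N := by
    intro hp
    have hnotD : w.getD (p - 1) E ≠ D := by
      have h := tw_stop (p := (· == D)) (l := (w.take (k - 1)).reverse)
        (by rw [← hrdef', hRLlen]; omega)
      rw [← hrdef', hRLgetD r (by omega)] at h
      rw [show p - 1 = k - 2 - r by omega]
      simpa using h
    have hdpk : depth w (k - 1) = depth w p := by
      have h := depth_const w p r hrD (by omega)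
      rwa [show p + r = k - 1 by omega] at h
    have hnotE : w.getD (p - 1) E ≠ E := by
      intro hcon
      have h := depth_succ w (p - 1) (by omega)
      rw [hcon, show p - 1 + 1 = p by omega] at h
      have h2 := hfirst (p - 1) (by omega)
      rw [hstep, hNk] at h2
      simp [dval] at h h2
      omega
    rcases hx : w.getD (p - 1) E with _ | _ | _
    · exact absurd hx hnotE
    · exact absurd hx hnotD
    · rfl
  -- assemble the decomposition
  have e1 : w.drop p = List.replicate r D ++ w.drop (k - 1) := by
    have h := drop_repl w r p hrD (by omega)
    rwa [show p + r = k - 1 by omega] at h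
  have e2 : w.drop (k - 1) = N :: w.drop k := by
    have h := drop_cons w (k - 1) (by omega)
    rwa [hNk, show k - 1 + 1 = k by omega] at h
  have e3 : w.drop k = List.replicate s D ++ w.drop (k + s) := drop_repl w s k hsD (by omega)
  have e4 : w.drop (k + s) = E :: w.drop (k + s + 1) := by
    have h := drop_cons w (k + s) (by omega)
    rwa [hsE] at h
  refine ⟨r, s, w.take p, w.drop (k + s + 1), ?_, rfl, rfl, ?_, ?_, ?_⟩
  · rw [List.length_take]; omega
  · conv_lhs => rw [← List.take_append_drop p w]
    rw [e1, e2, e3, e4]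
  · rcases Nat.eq_zero_or_pos p with hp | hp
    · left; rw [hp]; rfl
    · right
      rw [List.getLast?_eq_getElem?]
      have hlen : (w.take p).length = p := by rw [List.length_take]; omega
      rw [hlen, List.getElem?_eq_getElem (by omega)]
      have : (w.take p)[p - 1] = w[p - 1]'(by rw [← hL]; omega) := List.getElem_take
      rw [this, ← List.getD_eq_getElem w E (by rw [← hL]; omega), hAN hp]
  · show w.take (k - 1 - runR w) ++ _ ++ w.drop (k - 1 + runS w + 1) = _
    rw [← hrdef, ← hsdef, ← hpdef, show k - 1 + s + 1 = k + s by omega, e4, List.append_assoc]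

end PW2

/-- for the order E < N < D, the window map φ sends every bad path
in Del(n,n,l) into Del(n+1,n-1,l) with maj(W) = maj(φ(W)) + 1. -/
theorem phiWin_END (n l : ℕ) (hn : 1 ≤ n)
    (rank : Step → ℕ) (hrank : Function.Injective rank)
    (hEN : rank E < rank N) (hND : rank N < rank D) :
    ∀ w ∈ BDelSet n l,
      phiWin w ∈ DelSet (n + 1) (n - 1) l ∧ maj rank w = maj rank (phiWin w) + 1 := by
  intro w hw
  rw [BDelSet, Finset.mem_filter] at hw
  obtain ⟨hdel, hbad⟩ := hw
  rw [DelSet, Finset.mem_filter] at hdel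
  obtain ⟨hwords, hcE, hcN⟩ := (⟨hdel.1, hdel.2.1, hdel.2.2⟩ : _ ∧ _ ∧ _)
  have hlen : w.length = l := PW2.mem_Words.mp hwords
  have hbal : w.count N = w.count E := by omega
  obtain ⟨r, s, A, B, hAlen, hrr, hss, hweq, hA, hphi⟩ := PW2.decomp w hbad hbal
  have hAD : A.getLast? ≠ some D := by
    rcases hA with hA | hA
    · rw [hA]; simp
    · rw [hA]; simp
  constructor
  · rw [DelSet, Finset.mem_filter]
    rw [hweq] at hcE hcN hlen
    simp [List.count_append, List.count_replicate, List.count_cons, List.length_append,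
      List.length_replicate, List.length_cons] at hcE hcN hlen
    rcases r with _ | r'
    · rw [hphi, if_neg (show ¬ (1 ≤ 0) by omega)]
      refine ⟨PW2.mem_Words.mpr ?_, ?_, ?_⟩ <;>
        simp [List.count_append, List.count_replicate, List.count_cons, List.length_append,
          List.length_replicate, List.length_cons] <;>
        omega
    · rw [hphi, if_pos (show 1 ≤ r' + 1 by omega), show r' + 1 - 1 = r' by omega]
      refine ⟨PW2.mem_Words.mpr ?_, ?_, ?_⟩ <;>
        simp [List.count_append, List.count_replicate, List.count_cons, List.length_append,
          List.length_replicate, List.length_cons] <;>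
        omega
  · rw [PW.maj_eq_majA, PW.maj_eq_majA, hphi, hweq]
    rcases r with _ | r'
    · simp only [List.replicate_zero, List.nil_append]
      rw [if_neg (show ¬ (1 ≤ 0) by omega)]
      have heq : (List.replicate s D ++ [E]) ++ (E :: B) =
          List.replicate s D ++ (E :: (E :: B)) := by
        simp [List.append_assoc]
      rw [heq]
      exact PW.key0 rank hEN hND s A B hA hAD
    · have h1 : 1 ≤ r' + 1 := by omega
      rw [if_pos h1, show r' + 1 - 1 = r' by omega]
      have heq : (List.replicate r' D ++ [E] ++ List.replicate (s + 1) D) ++ (E :: B) =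
          List.replicate r' D ++ (E :: (List.replicate (s + 1) D ++ (E :: B))) := by
        simp [List.append_assoc]
      rw [heq]
      exact PW.key1 rank hEN hND r' s A B hA
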